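/- Let φ be a perfect 2-coloring of Ci_∞(D_n) with parameter matrix ((2n-b, b), (c, 2n-c)) where b, c > 0. Then b + c ∈ {4n, 2n, 2n+1, 2n-1}. -/

import Mathlib

/-- Neighborhood of `i` in the infinite circulant graph `Ci_∞(D_n)`,
`D_n = {±1, ±3, …, ±(2n-1)}`: the integers at odd distance less than `2n` from `i`. -/
noncomputable def nbrs (n : ℕ) (i : ℤ) : Finset ℤ :=
  (Finset.Icc (i - (2*(n:ℤ) - 1)) (i + (2*(n:ℤ) - 1))).filter (fun j => Odd (j - i))

/-- `φ` is a perfect 2-coloring of `Ci_∞(D_n)` with outer degrees `(b, c)`: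
every vertex of color 0 (black) has exactly `b` neighbors of color 1 (white), and
every vertex of color 1 has exactly `c` neighbors of color 0. -/
def Perfect2 (n : ℕ) (φ : ℤ → Fin 2) (b c : ℕ) : Prop :=
  (∀ i, φ i = 0 → ((nbrs n i).filter (fun j => φ j = 1)).card = b) ∧
  (∀ i, φ i = 1 → ((nbrs n i).filter (fun j => φ j = 0)).card = c)

lemma fin2_cases (x : Fin 2) : x = 0 ∨ x = 1 := by omega

lemma fin2_ne (x : Fin 2) : ¬ x = 1 ↔ x = 0 := by omega

lemma nbrs_eq_image (n : ℕ) (i : ℤ) :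
    nbrs n i = (Finset.range (2*n)).image (fun k : ℕ => i - (2*(n:ℤ) - 1) + 2*k) := by
  ext j
  simp only [nbrs, Finset.mem_filter, Finset.mem_Icc, Finset.mem_image, Finset.mem_range,
    Int.odd_iff]
  constructor
  · rintro ⟨⟨h1, h2⟩, h3⟩
    refine ⟨((j - i + 2*n - 1)/2).toNat, by omega, by omega⟩
  · rintro ⟨k, hk, rfl⟩
    refine ⟨⟨by omega, by omega⟩, by omega⟩

lemma card_nbrs (n : ℕ) (i : ℤ) : (nbrs n i).card = 2*n := by
  rw [nbrs_eq_image, Finset.card_image_of_injective _ (fun a b h => by omega),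
    Finset.card_range]

lemma filter_nbrs_card (n : ℕ) (i : ℤ) (p : ℤ → Prop) [DecidablePred p] :
    ((nbrs n i).filter p).card
      = ∑ k ∈ Finset.range (2*n), (if p (i - (2*(n:ℤ) - 1) + 2*k) then 1 else 0) := by
  rw [Finset.card_filter, nbrs_eq_image, Finset.sum_image (fun a _ b _ h => by omega)]

lemma slide (n : ℕ) (φ : ℤ → Fin 2) (i : ℤ) :
    ((nbrs n (i+2)).filter (fun j => φ j = 1)).card
        + (if φ (i - (2*(n:ℤ) - 1)) = 1 then 1 else 0)
      = ((nbrs n i).filter (fun j => φ j = 1)).card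
        + (if φ (i + 2*(n:ℤ) + 1) = 1 then 1 else 0) := by
  rw [filter_nbrs_card, filter_nbrs_card]
  have key := Finset.sum_range_succ (fun k : ℕ =>
    (if φ (i - (2*(n:ℤ) - 1) + 2*k) = 1 then 1 else 0)) (2*n)
  have key' := Finset.sum_range_succ' (fun k : ℕ =>
    (if φ (i - (2*(n:ℤ) - 1) + 2*k) = 1 then 1 else 0)) (2*n)
  have e1 : ∀ k : ℕ, i + 2 - (2*(n:ℤ) - 1) + 2*k = i - (2*(n:ℤ) - 1) + 2*(k+1 : ℕ) := by
    intro k; push_cast; ring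
  have e2 : i - (2*(n:ℤ) - 1) + 2*((2*n : ℕ) : ℤ) = i + 2*(n:ℤ) + 1 := by push_cast; ring
  simp only [e1] at *
  rw [key'] at key
  simp only [Nat.cast_zero, mul_zero, add_zero] at key
  rw [e2] at key
  omega

/-- If `(b,c)` is admissible for `Ci_∞(D_n)` with `b, c > 0`, then
`b + c ∈ {4n, 2n, 2n+1, 2n-1}`. -/
theorem admissible_pair_sum (n b c : ℕ) (hn : 0 < n) (hb : 0 < b) (hc : 0 < c)
    (φ : ℤ → Fin 2) (hφ : Perfect2 n φ b c) :
    b + c = 4*n ∨ b + c = 2*n ∨ b + c = 2*n + 1 ∨ b + c = 2*n - 1 := by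
  obtain ⟨h0, h1⟩ := hφ
  -- both colors exist
  have hex0 : ∃ x, φ x = 0 := by
    rcases fin2_cases (φ 0) with h | h
    · exact ⟨0, h⟩
    · have hcard := h1 0 h
      have hne : ((nbrs n 0).filter (fun j => φ j = 0)).Nonempty := by
        rw [← Finset.card_pos, hcard]; exact hc
      obtain ⟨x, hx⟩ := hne
      exact ⟨x, (Finset.mem_filter.mp hx).2⟩
  have hex1 : ∃ x, φ x = 1 := by
    rcases fin2_cases (φ 0) with h | h
    · have hcard := h0 0 h
      have hne : ((nbrs n 0).filter (fun j => φ j = 1)).Nonempty := by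
        rw [← Finset.card_pos, hcard]; exact hb
      obtain ⟨x, hx⟩ := hne
      exact ⟨x, (Finset.mem_filter.mp hx).2⟩
    · exact ⟨0, h⟩
  obtain ⟨x0, hx0⟩ := hex0
  obtain ⟨x1, hx1⟩ := hex1
  have hble : b ≤ 2*n := by
    rw [← h0 x0 hx0]
    exact (Finset.card_filter_le _ _).trans (card_nbrs n x0).le
  have hcle : c ≤ 2*n := by
    rw [← h1 x1 hx1]
    exact (Finset.card_filter_le _ _).trans (card_nbrs n x1).le
  -- number of white neighbors of a white vertex
  have hW : ∀ i, φ i = 1 → ((nbrs n i).filter (fun j => φ j = 1)).card = 2*n - c := by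
    intro i hi
    have key := Finset.card_filter_add_card_filter_not
      (s := nbrs n i) (p := fun j => φ j = 1)
    have hneg : (nbrs n i).filter (fun j => ¬ φ j = 1)
        = (nbrs n i).filter (fun j => φ j = 0) := by
      apply Finset.filter_congr; intro j _; simp [fin2_ne]
    rw [card_nbrs, hneg, h1 i hi] at key
    omega
  by_cases hmid : b + c = 2*n ∨ b + c = 2*n + 1 ∨ b + c = 2*n - 1
  · tauto
  push_neg at hmid
  -- |b + c - 2n| ≥ 2
  have hfar : b + c + 2 ≤ 2*n ∨ 2*n + 2 ≤ b + c := by omega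
  -- the coloring is 2-periodic
  have hconst : ∀ i : ℤ, φ (i + 2) = φ i := by
    intro i
    by_contra hne
    have hs := slide n φ i
    rcases fin2_cases (φ i) with hi | hi <;> rcases fin2_cases (φ (i+2)) with hi2 | hi2
    · exact hne (hi2.trans hi.symm)
    · rw [h0 i hi, hW (i+2) hi2] at hs
      split_ifs at hs <;> omega
    · rw [hW i hi, h0 (i+2) hi2] at hs
      split_ifs at hs <;> omega
    · exact hne (hi2.trans hi.symm)
  have hper : ∀ m : ℤ, φ (2*m) = φ 0 ∧ φ (2*m+1) = φ 1 := by
    intro m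
    induction m using Int.induction_on with
    | zero => norm_num
    | succ k ih =>
      have a1 := hconst (2*(k:ℤ))
      have a2 := hconst (2*(k:ℤ)+1)
      rw [show (2*(k:ℤ)+2) = 2*((k:ℤ)+1) by ring] at a1
      rw [show (2*(k:ℤ)+1+2) = 2*((k:ℤ)+1)+1 by ring] at a2
      exact ⟨a1.trans ih.1, a2.trans ih.2⟩
    | pred k ih =>
      have a1 := hconst (2*(-(k:ℤ)-1))
      have a2 := hconst (2*(-(k:ℤ)-1)+1)
      rw [show (2*(-(k:ℤ)-1)+2) = 2*(-(k:ℤ)) by ring] at a1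
      rw [show (2*(-(k:ℤ)-1)+1+2) = 2*(-(k:ℤ))+1 by ring] at a2
      exact ⟨a1.symm.trans ih.1, a2.symm.trans ih.2⟩
  have hparity : ∀ j : ℤ, (Odd j → φ j = φ 1) ∧ (Even j → φ j = φ 0) := by
    intro j
    constructor
    · rintro ⟨m, rfl⟩
      exact (hper m).2
    · rintro ⟨r, rfl⟩
      rw [show (r:ℤ) + r = 2*r by ring]
      exact (hper r).1
  have h01 : φ 0 ≠ φ 1 := by
    intro h
    have hval : ∀ j : ℤ, φ j = φ 0 := by
      intro j
      rcases Int.even_or_odd j with hj | hj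
      · exact (hparity j).2 hj
      · rw [(hparity j).1 hj, ← h]
    rw [hval x0] at hx0
    rw [hval x1] at hx1
    rw [hx0] at hx1
    exact absurd hx1 (by decide)
  -- parity coloring forces b = c = 2n
  have hodd_sub : ∀ {i j : ℤ}, j ∈ nbrs n i → Odd (j - i) :=
    fun hj => (Finset.mem_filter.mp hj).2
  left
  rcases fin2_cases (φ 0) with h00 | h00
  · have h11 : φ 1 = 1 := by
      rcases fin2_cases (φ 1) with h | h
      · exact absurd (h00.trans h.symm) h01
      · exact h
    have hbval : b = 2*n := by
      rw [← h0 0 h00, Finset.filter_true_of_mem, card_nbrs]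
      intro j hj
      have hodd : Odd j := by
        have := hodd_sub hj
        rw [Int.odd_iff] at *
        omega
      rw [(hparity j).1 hodd, h11]
    have hcval : c = 2*n := by
      rw [← h1 1 h11, Finset.filter_true_of_mem, card_nbrs]
      intro j hj
      have heven : Even j := by
        have := hodd_sub hj
        rw [Int.odd_iff] at this
        rw [Int.even_iff]
        omega
      rw [(hparity j).2 heven, h00]
    omega
  · have h11 : φ 1 = 0 := by
      rcases fin2_cases (φ 1) with h | h
      · exact h
      · exact absurd (h00.trans h.symm) h01
    have hbval : b = 2*n := by
      rw [← h0 1 h11, Finset.filter_true_of_mem, card_nbrs]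
      intro j hj
      have heven : Even j := by
        have := hodd_sub hj
        rw [Int.odd_iff] at this
        rw [Int.even_iff]
        omega
      rw [(hparity j).2 heven, h00]
    have hcval : c = 2*n := by
      rw [← h1 0 h00, Finset.filter_true_of_mem, card_nbrs]
      intro j hj
      have hodd : Odd j := by
        have := hodd_sub hj
        rw [Int.odd_iff] at *
        omega
      rw [(hparity j).1 hodd, h11]
    omega
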